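/- Let I be a nonempty finite set and W : Z₆^I → Z₂ a nonzero function. Then TS_Ham(0, W) ≥ 2·|spt R(W)| + 1, where R(W) is the indicator, supported on the standard basis vectors, of those e_x such that the x-coordinate is odd for an odd number of elements of spt W. -/

import Mathlib

open scoped BigOperators
open scoped Classical
open MeasureTheory Filter
open scoped ENNReal NNReal

noncomputable section

/-- The length of the shortest word in the alphabet `Gens` leading from `x` to `y`
under the (not necessarily associative) multiplication `mul`. -/
def wordLen {α : Type*} (mul : α → α → α) (Gens : Set α) (x y : α) : ℕ :=
  sInf {ℓ : ℕ | ∃ w : List α, (∀ g ∈ w, g ∈ Gens) ∧ w.length = ℓ ∧ w.foldl mul x = y}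

/-- The word metric on a group associated with a generating set `S`. -/
def groupWordDist {G : Type*} [Group G] (S : Set G) (g h : G) : ℕ :=
  wordLen (· * ·) S g h

/-- A group has exponential growth w.r.t. a generating set `S` if there is `c > 1`
such that the ball of radius `r` about the identity contains at least `c ^ r`
points for infinitely many positive integers `r`. -/
def HasExpGrowth {G : Type*} [Group G] (S : Set G) : Prop :=
  ∃ c : ℝ, 1 < c ∧ ∀ N : ℕ, ∃ r : ℕ, N ≤ r ∧ 0 < r ∧
    ∃ T : Finset G, (∀ g ∈ T, groupWordDist S 1 g ≤ r) ∧ (c : ℝ) ^ r ≤ (T.card : ℝ)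

/-- The pinned travelling salesman metric associated with the distance function `ρ`
and basepoint `x0`, evaluated on two (finitely supported) functions `X → ZMod 2`. -/
def TS {X : Type*} (ρ : X → X → ℝ) (x0 : X) (A B : X → ZMod 2) : ℝ :=
  if A = B then 0
  else 1 + sInf {L : ℝ | ∃ (ℓ : ℕ) (x : ℕ → X), 1 ≤ ℓ ∧ x 0 = x0 ∧ x ℓ = x0 ∧
    (∀ p : X, A p + B p ≠ 0 → ∃ i < ℓ, x i = p) ∧
    L = ∑ i ∈ Finset.range ℓ, ρ (x i) (x (i + 1))}

/-- The quotient of an addition-invariant distance function `d` by the subgroup `F`,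
expressed on representatives: `quotDistBy d F x y = inf_{v ∈ F} d x (y + v)`. -/
def quotDistBy {E : Type*} [Add E] (d : E → E → ℝ) (F : Set E) (x y : E) : ℝ :=
  sInf {r : ℝ | ∃ v ∈ F, r = d x (y + v)}

/-- The distortion of a map `f` between "metric" spaces `(Y, σ)` and `(Z, θ)`, where the
suprema defining it run over pairs satisfying the apartness relation `P`
(typically: `≠`, or "lying in distinct cosets"). -/
def distortionOn {Y Z : Type*} (σ : Y → Y → ℝ) (θ : Z → Z → ℝ)
    (P : Y → Y → Prop) (f : Y → Z) : ℝ :=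
  sSup {r : ℝ | ∃ u v, P u v ∧ r = θ (f u) (f v) / σ u v} *
  sSup {r : ℝ | ∃ u v, P u v ∧ r = σ u v / θ (f u) (f v)}

/-- Multiplication of the (restricted) wreath-product-style semidirect product
`M^{⊕H} ⋊ H`, where `H` has multiplication `hmul` and acts on `H →₀ M` by
coordinate right-translation:
`(a, h₁) · (b, h₂) = ((a (· h₂⁻¹)) + b, h₁ h₂)`. -/
def wrMul {H M : Type*} [AddCommMonoid M] (hmul : H → H → H) :
    ((H →₀ M) × H) → ((H →₀ M) × H) → ((H →₀ M) × H) :=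
  fun x y => (Finsupp.mapDomain (fun h => hmul h y.2) x.1 + y.1, hmul x.2 y.2)

/-- The lifted generating set `{(±e_{e_G}, e_G)} ∪ {(0, s) : s ∈ S}` of `Z₆ ≀ G`. -/
def liftGens6 {G : Type*} [Group G] (S : Set G) : Set ((G →₀ ZMod 6) × G) :=
  {p | p = (Finsupp.single (1 : G) (1 : ZMod 6), (1 : G)) ∨
       p = (Finsupp.single (1 : G) (-1 : ZMod 6), (1 : G)) ∨
       (p.1 = 0 ∧ p.2 ∈ S)}

/-- The lifted generating set `{(δ_{e_H}, e_H)} ∪ {(0, t) : t ∈ T}` of `Z₂^{⊕H} ⋊ H`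
(and, after quotienting by an invariant subspace `V`, of `(Z₂^{⊕H}/V) ⋊ H`). -/
def liftGens2 {H : Type*} (eH : H) (T : Set H) : Set ((H →₀ ZMod 2) × H) :=
  {p | p = (Finsupp.single eH (1 : ZMod 2), eH) ∨ (p.1 = 0 ∧ p.2 ∈ T)}

/-- The word metric of the quotient group `(Z₂^{⊕H}/V) ⋊ H` (`V` an `H`-invariant
subspace of `Z₂^{⊕H}`), expressed on representatives in `Z₂^{⊕H} × H`: the least
length of a word in `Gens` leading from `x` to some representative of the coset
of `y`. -/
def quotWordLen {H : Type*} (hmul : H → H → H) (V : Set (H →₀ ZMod 2))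
    (Gens : Set ((H →₀ ZMod 2) × H)) (x y : (H →₀ ZMod 2) × H) : ℕ :=
  sInf {ℓ : ℕ | ∃ w : List ((H →₀ ZMod 2) × H), (∀ g ∈ w, g ∈ Gens) ∧ w.length = ℓ ∧
    ∃ v ∈ V, w.foldl (wrMul hmul) x = (y.1 + v, y.2)}

/-- The word metric on `Z₆ = ZMod 6` for the generating set `{1, -1}`. -/
def z6dist (a b : ZMod 6) : ℕ := min (b - a).val (a - b).val

/-- The Hamming metric on `Z₆^I` built from the word metric on each factor. -/
def hamZ6 {I : Type*} [Fintype I] (u v : I → ZMod 6) : ℝ :=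
  ∑ x, (z6dist (u x) (v x) : ℝ)

/-- The pinned travelling salesman metric on `Z₂^{Z₆^I}` over `(Z₆^I, d_Ham)`,
pinned at `0`. -/
def TSHam {I : Type*} [Fintype I] (A B : (I → ZMod 6) → ZMod 2) : ℝ :=
  TS hamZ6 (0 : I → ZMod 6) A B

/-- Coordinatewise reduction `Z₆ → Z₂`. -/
def zbar (a : ZMod 6) : ZMod 2 := (a.val : ZMod 2)

/-- The `Z₂`-valued inner product on `Z₂^I`. -/
def ip2 {I : Type*} [Fintype I] (a b : I → ZMod 2) : ZMod 2 := ∑ x, a x * b x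

/-- The annihilator of a set `C ⊆ Z₂^I`. -/
def perp2 {I : Type*} [Fintype I] (C : Set (I → ZMod 2)) : Set (I → ZMod 2) :=
  {a | ∀ c ∈ C, ip2 a c = 0}

/-- The `Z₂`-valued inner product on `Z₂^α` for a finite type `α`. -/
def ipF {α : Type*} [Fintype α] (W V : α → ZMod 2) : ZMod 2 := ∑ w, W w * V w

/-- The linear functional `L_a : Z₆^I → Z₂`, `L_a(v) = ⟨v̄, a⟩`. -/
def La {I : Type*} [Fintype I] (a : I → ZMod 2) : (I → ZMod 6) → ZMod 2 :=
  fun v => ∑ x, zbar (v x) * a x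

/-- The subspace `D = span({1} ∪ {L_a : a ∈ C}) ≤ Z₂^{Z₆^I}`. -/
def Dspan {I : Type*} [Fintype I] (C : Set (I → ZMod 2)) :
    Submodule (ZMod 2) ((I → ZMod 6) → ZMod 2) :=
  Submodule.span (ZMod 2) ({fun _ => (1 : ZMod 2)} ∪ (La '' C))

/-- The annihilator `D^⊥` of `D = span({1} ∪ {L_a : a ∈ C})` inside `Z₂^{Z₆^I}`. -/
def DperpSet {I : Type*} [Fintype I] (C : Set (I → ZMod 2)) :
    Set ((I → ZMod 6) → ZMod 2) :=
  {W | ∀ D' ∈ Dspan C, ipF W D' = 0}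

/-- The set `B = {e_x : x ∈ I}` of standard basis vectors in `Z₆^I`. -/
def Bset {I : Type*} [Fintype I] : Set (I → ZMod 6) :=
  Set.range (fun x : I => Pi.single x (1 : ZMod 6))

/-- The embedding `ξ : Z₂^I → Z₂^{Z₆^I}`: `ξ(a)` is supported on `B` with
`ξ(a)(e_x) = a_x`. -/
def xi {I : Type*} [Fintype I] (a : I → ZMod 2) : (I → ZMod 6) → ZMod 2 :=
  fun w => ∑ x : I, if w = (Pi.single x (1 : ZMod 6) : I → ZMod 6) then a x else 0

/-- The map `R : Z₂^{Z₆^I} → Z₂^{Z₆^I}`: `R(W)` is supported on `B` with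
`R(W)(e_x) = Σ_w W(w)·⟨ē_x, w̄⟩`. -/
def Rmap {I : Type*} [Fintype I] (W : (I → ZMod 6) → ZMod 2) :
    (I → ZMod 6) → ZMod 2 :=
  fun w => ∑ x : I, if w = (Pi.single x (1 : ZMod 6) : I → ZMod 6) then (∑ v : I → ZMod 6, W v * zbar (v x)) else 0

/-- The indicator function `𝒜 : Z₆ → Z₂` of `{0, 1, 3, 4} ⊆ Z₆`. -/
def Acal : ZMod 6 → ZMod 2 := fun v => if v = 0 ∨ v = 1 ∨ v = 3 ∨ v = 4 then 1 else 0


/-- The map `Q_n` of the paper: given the excluded region `E` (which should equal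
`I₁ ∪ ⋯ ∪ Iₙ ∪ {y₁, …, yₙ}`), the set `Iₙ = In`, the point `yₙ = yn`,
a vector `u ∈ Z₆^{⊕(X∖E)}`, a function `W ∈ Z₂^{Z₆^{Iₙ}}` and `u' ∈ Z₆`,
`Qmap E In yn u W u'` is the element of `Z₂^{Z₆^{⊕X}}` given by
`w ↦ [w|_{X∖E} = u|_{X∖E}] ⬝ W(w|_{Iₙ}) ⬝ 𝒜(w_{yₙ} - u')`. -/
def Qmap {X : Type*} (E : Set X) (In : Finset X) (yn : X)
    (u : X →₀ ZMod 6) (W : ({x // x ∈ In} → ZMod 6) → ZMod 2) (u' : ZMod 6) :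
    (X →₀ ZMod 6) → ZMod 2 :=
  fun w => (if ∀ x ∉ E, w x = u x then 1 else 0) *
    W (fun x => w x.1) * Acal (w yn - u')

/-- The finite set `Eₙ = I₁ ∪ ⋯ ∪ Iₙ ∪ {y₁, …, yₙ}` (with indexing starting at `0`). -/
def EFin {G : Type*} (I : ℕ → Finset G) (y : ℕ → G) (n : ℕ) : Finset G :=
  ((Finset.range (n + 1)).biUnion I) ∪ (Finset.range (n + 1)).image y

/-- The function `Q̃ₙ(0, W, 0) ∈ Z₂^{⊕(Z₆ ≀ G)}`, realized as a finitely supported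
function: it is supported on pairs `(w, e_G)` with `w` supported inside `E`, and its
value there is `W(w|_{Iₙ}) ⬝ 𝒜(w_{yₙ})`.  (Here `E` should contain `Iₙ` and `yₙ`;
it will be `EFin I y n`.) -/
def QF {G : Type*} [Group G] (E : Finset G) (In : Finset G) (yn : G)
    (W : ({x // x ∈ In} → ZMod 6) → ZMod 2) : (((G →₀ ZMod 6) × G) →₀ ZMod 2) :=
  ∑ f : ({x // x ∈ E} → ZMod 6),
    Finsupp.single ((∑ x ∈ E.attach, Finsupp.single (x : G) (f x), (1 : G)))
      (W (fun x => if h : (x : G) ∈ E then f ⟨x, h⟩ else 0) *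
        Acal (if h : yn ∈ E then f ⟨yn, h⟩ else 0))

/-- Given a translation-invariant subspace `U ≤ Z₂^{⊕((Z₆ ≀ G)₀)}` (the zero section
being identified with `Z₆^{⊕G}`), the subspace
`V := {𝒱 ∈ Z₂^{⊕(Z₆ ≀ G)} : ∀ g₁, ((w_g)_g ↦ 𝒱((w_{g g₁⁻¹})_g, g₁)) ∈ U}`. -/
def Vext {G : Type*} [Group G] (U : Set ((G →₀ ZMod 6) →₀ ZMod 2)) :
    Set (((G →₀ ZMod 6) × G) →₀ ZMod 2) :=
  {V : ((G →₀ ZMod 6) × G) →₀ ZMod 2 | ∀ g₁ : G, ∃ u ∈ U,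
    ∀ w : G →₀ ZMod 6, u w = V (Finsupp.mapDomain (· * g₁) w, g₁)}

/-- Extension by zero of a function on the zero section `(Z₆ ≀ G)₀ ≅ Z₆^{⊕G}`
to all of `Z₆ ≀ G`. -/
def extZero {G : Type*} [Group G] (A : (G →₀ ZMod 6) →₀ ZMod 2) :
    ((G →₀ ZMod 6) × G) →₀ ZMod 2 :=
  Finsupp.mapDomain (fun w => (w, (1 : G))) A

end

lemma z6dist_triangle' : ∀ a b c : ZMod 6, z6dist a c ≤ z6dist a b + z6dist b c := by decide

lemma z6dist_pos' : ∀ {a b : ZMod 6}, a ≠ b → 1 ≤ z6dist a b := by decide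

lemma z6dist_self' (a : ZMod 6) : z6dist a a = 0 := by simp [z6dist]

lemma z6chain_le (a : ℕ → ZMod 6) :
    ∀ n, z6dist (a 0) (a n) ≤ ∑ i ∈ Finset.range n, z6dist (a i) (a (i + 1))
  | 0 => by simp [z6dist_self']
  | n + 1 => by
      rw [Finset.sum_range_succ]
      exact le_trans (z6dist_triangle' _ (a n) _)
        (Nat.add_le_add_right (z6chain_le a n) _)

lemma z6tour_ge_two (a : ℕ → ZMod 6) (n i0 : ℕ) (h0 : a 0 = 0) (hn : a n = 0)
    (hi : i0 ≤ n) (hne : a i0 ≠ 0) :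
    2 ≤ ∑ i ∈ Finset.range n, z6dist (a i) (a (i + 1)) := by
  have h1 : 1 ≤ z6dist (a 0) (a i0) := z6dist_pos' (by rw [h0]; exact Ne.symm hne)
  have h2 : 1 ≤ z6dist (a i0) (a n) := z6dist_pos' (by rw [hn]; exact hne)
  have s1 : z6dist (a 0) (a i0) ≤ ∑ i ∈ Finset.range i0, z6dist (a i) (a (i + 1)) :=
    z6chain_le a i0
  have s2 : z6dist (a i0) (a n) ≤ ∑ i ∈ Finset.Ico i0 n, z6dist (a i) (a (i + 1)) := by
    have h := z6chain_le (fun j => a (i0 + j)) (n - i0)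
    rw [Finset.sum_Ico_eq_sum_range]
    simpa [Nat.add_sub_cancel' hi, add_assoc] using h
  have hsplit : ∑ i ∈ Finset.range n, z6dist (a i) (a (i + 1))
      = (∑ i ∈ Finset.range i0, z6dist (a i) (a (i + 1)))
        + ∑ i ∈ Finset.Ico i0 n, z6dist (a i) (a (i + 1)) := by
    rw [Finset.range_eq_Ico, ← Finset.sum_Ico_consecutive _ (Nat.zero_le i0) hi,
      ← Finset.range_eq_Ico]
  omega

lemma pi_single_inj {I : Type*} [Fintype I] :
    Function.Injective (fun x : I => (Pi.single x 1 : I → ZMod 6)) := by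
  intro x y h
  by_contra hne
  have := congrFun h x
  simp only [Pi.single_eq_same, Pi.single_eq_of_ne hne] at this
  exact absurd this (by decide)

lemma support_Rmap {I : Type*} [Fintype I] (W : (I → ZMod 6) → ZMod 2) :
    Function.support (Rmap W) =
      (fun x : I => (Pi.single x 1 : I → ZMod 6)) ''
        {x : I | (∑ v : I → ZMod 6, W v * zbar (v x)) ≠ 0} := by
  ext w
  simp only [Function.mem_support, Set.mem_image, Set.mem_setOf_eq]
  constructor
  · intro hw
    unfold Rmap at hw
    obtain ⟨x, _, hx⟩ := Finset.exists_ne_zero_of_sum_ne_zero hw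
    by_cases h : w = (Pi.single x 1 : I → ZMod 6)
    · rw [if_pos h] at hx
      exact ⟨x, hx, h.symm⟩
    · rw [if_neg h] at hx; exact absurd rfl hx
  · rintro ⟨x, hx, rfl⟩
    have : Rmap W (Pi.single x 1 : I → ZMod 6)
        = ∑ x' : I, if x = x' then (∑ v : I → ZMod 6, W v * zbar (v x')) else 0 := by
      unfold Rmap
      refine Finset.sum_congr rfl fun x' _ => ?_
      rcases eq_or_ne x x' with h | h
      · subst h; simp
      · rw [if_neg (fun hc => h (pi_single_inj hc)), if_neg h]
    rw [this, Finset.sum_ite_eq]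
    simpa using hx

/-- For a nonzero `W : Z₆^I → Z₂`,
`TS_Ham(0, W) ≥ 2·|spt R(W)| + 1`. -/
theorem TSHam_ge_Rmap_support {I : Type*} [Fintype I] [Nonempty I]
    (W : (I → ZMod 6) → ZMod 2) (hW : W ≠ 0) :
    2 * (Set.ncard (Function.support (Rmap W)) : ℝ) + 1 ≤
      TSHam (0 : (I → ZMod 6) → ZMod 2) W := by
  classical
  set c : I → ZMod 2 := fun x0 => ∑ v : I → ZMod 6, W v * zbar (v x0) with hc
  have hcard : Set.ncard (Function.support (Rmap W))
      = (Finset.univ.filter fun x : I => c x ≠ 0).card := by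
    rw [support_Rmap, Set.ncard_image_of_injective _ pi_single_inj,
      show {x : I | (∑ v : I → ZMod 6, W v * zbar (v x)) ≠ 0}
        = ↑(Finset.univ.filter fun x : I => c x ≠ 0) by ext t; simp [hc]]
    exact Set.ncard_coe_finset _
  unfold TSHam TS
  rw [if_neg (show (0 : (I → ZMod 6) → ZMod 2) ≠ W from fun h => hW h.symm),
    add_comm (1 : ℝ), hcard]
  refine (add_le_add_iff_right 1).2 (le_csInf ?_ ?_)
  · -- nonemptiness: a tour through all of Z₆^I
    set l := (Finset.univ : Finset (I → ZMod 6)).toList with hl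
    refine ⟨_, l.length + 1,
      fun i => if h : 0 < i ∧ i - 1 < l.length then l.get ⟨i - 1, h.2⟩ else 0,
      by omega, by simp, ?_, ?_, rfl⟩
    · show (if h : _ ∧ _ then l.get ⟨l.length + 1 - 1, h.2⟩ else 0) = 0
      rw [dif_neg (by omega)]
    · intro p _
      have hp : p ∈ l := by rw [hl]; exact Finset.mem_toList.2 (Finset.mem_univ p)
      obtain ⟨j, hj⟩ := List.mem_iff_get.1 hp
      refine ⟨j + 1, by omega, ?_⟩
      show (if h : _ ∧ _ then l.get ⟨(j : ℕ) + 1 - 1, h.2⟩ else 0) = p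
      rw [dif_pos ⟨by omega, by simp⟩]
      exact hj
  · rintro L ⟨ℓ, x, hℓ, hx0, hxl, hcov, rfl⟩
    have hswap : ∑ i ∈ Finset.range ℓ, hamZ6 (x i) (x (i + 1))
        = ∑ x0 : I, ∑ i ∈ Finset.range ℓ, (z6dist (x i x0) (x (i + 1) x0) : ℝ) := by
      simp only [hamZ6]; exact Finset.sum_comm
    have hcoord : ∀ x0 ∈ Finset.univ.filter (fun x0 : I => c x0 ≠ 0),
        (2 : ℝ) ≤ ∑ i ∈ Finset.range ℓ, (z6dist (x i x0) (x (i + 1) x0) : ℝ) := by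
      intro x0 hx0mem
      rw [Finset.mem_filter] at hx0mem
      obtain ⟨v, hv1, hv2⟩ : ∃ v, W v ≠ 0 ∧ zbar (v x0) ≠ 0 := by
        by_contra hcon
        push_neg at hcon
        refine hx0mem.2 (Finset.sum_eq_zero fun v _ => ?_)
        by_cases h : W v = 0
        · rw [h, zero_mul]
        · rw [hcon v h, mul_zero]
      have hvne : v x0 ≠ 0 := fun h => hv2 (by simp [zbar, h])
      obtain ⟨i0, hi0l, hi0⟩ := hcov v (by simpa using hv1)
      have := z6tour_ge_two (fun i => x i x0) ℓ i0
        (by show x 0 x0 = 0; rw [hx0]; rfl) (by show x ℓ x0 = 0; rw [hxl]; rfl) (le_of_lt hi0l)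
        (by simpa [hi0] using hvne)
      exact_mod_cast this
    calc (2 : ℝ) * ((Finset.univ.filter fun x : I => c x ≠ 0).card : ℝ)
        = ∑ _x0 ∈ Finset.univ.filter (fun x0 : I => c x0 ≠ 0), (2 : ℝ) := by
          rw [Finset.sum_const, nsmul_eq_mul, mul_comm]
      _ ≤ ∑ x0 ∈ Finset.univ.filter (fun x0 : I => c x0 ≠ 0),
            ∑ i ∈ Finset.range ℓ, (z6dist (x i x0) (x (i + 1) x0) : ℝ) :=
          Finset.sum_le_sum hcoord
      _ ≤ ∑ x0 : I, ∑ i ∈ Finset.range ℓ, (z6dist (x i x0) (x (i + 1) x0) : ℝ) :=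
          Finset.sum_le_sum_of_subset_of_nonneg (Finset.subset_univ _)
            (fun _ _ _ => Finset.sum_nonneg fun _ _ => Nat.cast_nonneg _)
      _ = ∑ i ∈ Finset.range ℓ, hamZ6 (x i) (x (i + 1)) := hswap.symm
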